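/- For all real numbers θ₀, θ₁, ψ₀, ψ₁, with α = θ₀ − ψ₀, β = θ₀ − ψ₁, γ = θ₁ − ψ₀, δ = θ₁ − ψ₁, one has (1/4)·(sin α² + (1/2)·cos β² + (1/2)·sin γ² + (1/2)·sin δ²) ≤ (1/4)·(5/4 + (√6 + √(3/2))/4), and there exist θ₀, θ₁, ψ₀, ψ₁ attaining equality. Hence the maximum quantum success probability of the paper's partition 2+1+1+1 game equals (1/4)(5/4 + (√6 + √(3/2))/4) ≈ 0.542. -/

import Mathlib

open Real

private lemma amp (A B x : ℝ) : A * cos x + B * sin x ≤ Real.sqrt (A^2 + B^2) := by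
  have h := Real.sin_sq_add_cos_sq x
  have h1 : (A * cos x + B * sin x)^2 ≤ A^2 + B^2 := by
    nlinarith [sq_nonneg (A * sin x - B * cos x)]
  calc A * cos x + B * sin x ≤ |A * cos x + B * sin x| := le_abs_self _
    _ = Real.sqrt ((A * cos x + B * sin x)^2) := (Real.sqrt_sq_eq_abs _).symm
    _ ≤ Real.sqrt (A^2 + B^2) := Real.sqrt_le_sqrt h1

private lemma tang (v v₀ : ℝ) (hv : 0 ≤ v) (h0 : 0 < v₀) :
    Real.sqrt v ≤ (v + v₀) / (2 * Real.sqrt v₀) := by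
  have hs : Real.sqrt v ^ 2 = v := Real.sq_sqrt hv
  have hs0 : Real.sqrt v₀ ^ 2 = v₀ := Real.sq_sqrt h0.le
  have hp : 0 < Real.sqrt v₀ := Real.sqrt_pos.2 h0
  rw [le_div_iff₀ (by positivity)]
  nlinarith [sq_nonneg (Real.sqrt v - Real.sqrt v₀)]

private lemma sqrt_eq' (a b : ℝ) (hb : 0 ≤ b) (h : b^2 = a) : Real.sqrt a = b := by
  rw [← h, Real.sqrt_sq hb]

private lemma key (a b c d : ℝ) :
    -cos (a - c) + cos (a - d)/2 - cos (b - c)/2 - cos (b - d)/2 ≤ 3 * Real.sqrt 6 / 4 := by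
  have hs : Real.sqrt 6 ^ 2 = 6 := Real.sq_sqrt (by norm_num)
  have hsp : (0:ℝ) < Real.sqrt 6 := Real.sqrt_pos.2 (by norm_num)
  set t := c - d with ht
  have had : a - d = (a - c) + t := by ring
  have hbd : b - d = (b - c) + t := by ring
  rw [had, hbd, cos_add, cos_add]
  have hpy := Real.sin_sq_add_cos_sq t
  have h1 := amp (cos t / 2 - 1) (-(sin t / 2)) (a - c)
  have h2 := amp (-(1/2) - cos t / 2) (sin t / 2) (b - c)
  have e1 : (cos t / 2 - 1)^2 + (-(sin t / 2))^2 = 5/4 - cos t := by linear_combination hpy / 4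
  have e2 : (-(1/2) - cos t / 2)^2 + (sin t / 2)^2 = (1 + cos t)/2 := by linear_combination hpy / 4
  rw [e1] at h1
  rw [e2] at h2
  have h32 : Real.sqrt (3/2) = Real.sqrt 6 / 2 := sqrt_eq' _ _ (by positivity) (by nlinarith)
  have h38 : Real.sqrt (3/8) = Real.sqrt 6 / 4 := sqrt_eq' _ _ (by positivity) (by nlinarith)
  have hc1 := Real.cos_le_one t
  have hc2 := Real.neg_one_le_cos t
  have t1 := tang (5/4 - cos t) (3/2) (by linarith) (by norm_num)
  have t2 := tang ((1 + cos t)/2) (3/8) (by linarith) (by norm_num)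
  rw [h32] at t1
  rw [h38] at t2
  have d1 : ((5/4 - cos t) + 3/2) / (2 * (Real.sqrt 6 / 2)) = (11/4 - cos t) / Real.sqrt 6 := by
    field_simp; ring
  have d2 : ((1 + cos t)/2 + 3/8) / (2 * (Real.sqrt 6 / 4)) = (7/4 + cos t) / Real.sqrt 6 := by
    field_simp; ring
  rw [d1] at t1
  rw [d2] at t2
  have final : (11/4 - cos t) / Real.sqrt 6 + (7/4 + cos t) / Real.sqrt 6 = 3 * Real.sqrt 6 / 4 := by
    rw [← add_div, div_eq_iff hsp.ne']
    linear_combination (-3/4) * hs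
  linarith [t1, t2, h1, h2]

/-- The maximum quantum success probability of the paper's partition 2+1+1+1
game equals `(1/4)(5/4 + (√6 + √(3/2))/4) ≈ 0.542`. -/
theorem partition_2111_quantum_value :
    (∀ θ₀ θ₁ ψ₀ ψ₁ : ℝ,
      (1 / 4) * (sin (θ₀ - ψ₀) ^ 2 + (1 / 2) * cos (θ₀ - ψ₁) ^ 2 +
        (1 / 2) * sin (θ₁ - ψ₀) ^ 2 + (1 / 2) * sin (θ₁ - ψ₁) ^ 2)
        ≤ (1 / 4) * (5 / 4 + (Real.sqrt 6 + Real.sqrt (3 / 2)) / 4)) ∧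
    (∃ θ₀ θ₁ ψ₀ ψ₁ : ℝ,
      (1 / 4) * (sin (θ₀ - ψ₀) ^ 2 + (1 / 2) * cos (θ₀ - ψ₁) ^ 2 +
        (1 / 2) * sin (θ₁ - ψ₀) ^ 2 + (1 / 2) * sin (θ₁ - ψ₁) ^ 2)
        = (1 / 4) * (5 / 4 + (Real.sqrt 6 + Real.sqrt (3 / 2)) / 4)) := by
  have hs : Real.sqrt 6 ^ 2 = 6 := Real.sq_sqrt (by norm_num)
  have h32 : Real.sqrt (3/2) = Real.sqrt 6 / 2 := sqrt_eq' _ _ (by positivity) (by nlinarith)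
  constructor
  · intro θ₀ θ₁ ψ₀ ψ₁
    have k := key (2*θ₀) (2*θ₁) (2*ψ₀) (2*ψ₁)
    have s1 : sin (θ₀ - ψ₀) ^ 2 = 1/2 - cos (2*θ₀ - 2*ψ₀) / 2 := by
      have hc := Real.cos_sq (θ₀ - ψ₀)
      have hp := Real.sin_sq_add_cos_sq (θ₀ - ψ₀)
      have h2 : 2 * (θ₀ - ψ₀) = 2*θ₀ - 2*ψ₀ := by ring
      rw [h2] at hc
      linarith
    have s2 : cos (θ₀ - ψ₁) ^ 2 = 1/2 + cos (2*θ₀ - 2*ψ₁) / 2 := by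
      have hc := Real.cos_sq (θ₀ - ψ₁)
      have h2 : 2 * (θ₀ - ψ₁) = 2*θ₀ - 2*ψ₁ := by ring
      rw [h2] at hc
      linarith
    have s3 : sin (θ₁ - ψ₀) ^ 2 = 1/2 - cos (2*θ₁ - 2*ψ₀) / 2 := by
      have hc := Real.cos_sq (θ₁ - ψ₀)
      have hp := Real.sin_sq_add_cos_sq (θ₁ - ψ₀)
      have h2 : 2 * (θ₁ - ψ₀) = 2*θ₁ - 2*ψ₀ := by ring
      rw [h2] at hc
      linarith
    have s4 : sin (θ₁ - ψ₁) ^ 2 = 1/2 - cos (2*θ₁ - 2*ψ₁) / 2 := by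
      have hc := Real.cos_sq (θ₁ - ψ₁)
      have hp := Real.sin_sq_add_cos_sq (θ₁ - ψ₁)
      have h2 : 2 * (θ₁ - ψ₁) = 2*θ₁ - 2*ψ₁ := by ring
      rw [h2] at hc
      linarith
    rw [s1, s2, s3, s4, h32]
    linarith
  · -- witness
    have hb1 : (-1:ℝ) ≤ -(3 * Real.sqrt 6 / 8) := by nlinarith
    have hb1' : -(3 * Real.sqrt 6 / 8) ≤ (1:ℝ) := by nlinarith
    have hb2 : (-1:ℝ) ≤ -(Real.sqrt 6 / 4) := by nlinarith
    have hb2' : -(Real.sqrt 6 / 4) ≤ (1:ℝ) := by nlinarith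
    set x := -arccos (-(3 * Real.sqrt 6 / 8)) with hx
    set y := arccos (-(Real.sqrt 6 / 4)) with hy
    set t := arccos (-(1/4:ℝ)) with htdef
    refine ⟨x/2, y/2, 0, -(t/2), ?_⟩
    have hcx : cos x = -(3 * Real.sqrt 6 / 8) := by
      rw [hx, Real.cos_neg]; exact Real.cos_arccos hb1 hb1'
    have hsx : sin x = -(Real.sqrt 10 / 8) := by
      rw [hx, Real.sin_neg, Real.sin_arccos]
      congr 1
      apply sqrt_eq' _ _ (by positivity)
      rw [div_pow, Real.sq_sqrt (by norm_num : (0:ℝ) ≤ 10)]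
      nlinarith
    have hcy : cos y = -(Real.sqrt 6 / 4) := Real.cos_arccos hb2 hb2'
    have hsy : sin y = Real.sqrt 10 / 4 := by
      rw [hy, Real.sin_arccos]
      apply sqrt_eq' _ _ (by positivity)
      rw [div_pow, Real.sq_sqrt (by norm_num : (0:ℝ) ≤ 10)]
      nlinarith
    have hct : cos t = -(1/4) := Real.cos_arccos (by norm_num) (by norm_num)
    have hst : sin t = Real.sqrt 15 / 4 := by
      rw [htdef, Real.sin_arccos]
      apply sqrt_eq' _ _ (by positivity)
      rw [div_pow, Real.sq_sqrt (by norm_num : (0:ℝ) ≤ 15)]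
      norm_num
    have hprod : Real.sqrt 10 * Real.sqrt 15 = 5 * Real.sqrt 6 := by
      rw [← Real.sqrt_mul (by norm_num : (0:ℝ) ≤ 10)]
      apply sqrt_eq' _ _ (by positivity)
      rw [mul_pow, Real.sq_sqrt (by norm_num : (0:ℝ) ≤ 6)]
      norm_num
    -- half angle computations
    have half : ∀ z : ℝ, sin (z/2)^2 = 1/2 - cos z / 2 ∧ cos (z/2)^2 = 1/2 + cos z / 2 := by
      intro z
      have h1 := Real.cos_sq (z/2)
      have h2 := Real.sin_sq_add_cos_sq (z/2)
      have h3 : 2 * (z/2) = z := by ring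
      rw [h3] at h1
      constructor <;> linarith
    have e1 : (x/2 - 0 : ℝ) = x/2 := by ring
    have e2 : (x/2 - -(t/2) : ℝ) = (x + t)/2 := by ring
    have e3 : (y/2 - 0 : ℝ) = y/2 := by ring
    have e4 : (y/2 - -(t/2) : ℝ) = (y + t)/2 := by ring
    rw [e1, e2, e3, e4, (half x).1, (half (x+t)).2, (half y).1, (half (y+t)).1]
    rw [cos_add, cos_add, hcx, hsx, hcy, hsy, hct, hst, h32]
    nlinarith [hprod, hs]
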